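/- For every k ≥ 0 the half-step of the alternating minimization contracts: H^{k+1/2} − H* ≤ (1 − κβ₁/(8L₁))(H^k − H*), where H^{k+1/2} = H(x₁^{k+1}, x₂^k). -/

import Mathlib

open Set


open Filter Topology

/-- Along a feasible direction inside a convex set, the difference quotients of a
function Fréchet-differentiable within the set converge to the directional derivative. -/
lemma slope_tendsto_dir {E : Type*} [NormedAddCommGroup E] [NormedSpace ℝ E]
    {f : E → ℝ} {Df : E →L[ℝ] ℝ} {S : Set E} {x d : E}
    (hS : Convex ℝ S) (hx : x ∈ S) (hxd : x + d ∈ S)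
    (hf : HasFDerivWithinAt f Df S x) :
    Tendsto (fun t : ℝ => (f (x + t • d) - f x) / t) (𝓝[>] (0:ℝ)) (𝓝 (Df d)) := by
  have hmaps : Set.MapsTo (fun t : ℝ => x + t • d) (Set.Icc (0:ℝ) 1) S := by
    intro t ht
    have h := hS hx hxd (by linarith [ht.1, ht.2] : (0:ℝ) ≤ 1 - t) ht.1 (by ring)
    have heq : (1 - t) • x + t • (x + d) = x + t • d := by
      rw [sub_smul, one_smul, smul_add]; abel
    rwa [heq] at h
  have hγ : HasDerivWithinAt (fun t : ℝ => x + t • d) d (Set.Icc (0:ℝ) 1) 0 := by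
    have h1 : HasDerivAt (fun t : ℝ => x + t • d) d 0 := by
      simpa using (((hasDerivAt_id (0:ℝ)).smul_const d).const_add x)
    exact h1.hasDerivWithinAt
  have hx0 : (fun t : ℝ => x + t • d) 0 = x := by simp
  have hcomp : HasDerivWithinAt (fun t : ℝ => f (x + t • d)) (Df d) (Set.Icc (0:ℝ) 1) 0 := by
    have := HasFDerivWithinAt.comp_hasDerivWithinAt (l := f) (f := fun t : ℝ => x + t • d)
      (0:ℝ) (by rw [zero_smul, add_zero]; exact hf) hγ hmaps
    simpa [Function.comp_def] using this
  have htend := hasDerivWithinAt_iff_tendsto_slope.mp hcomp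
  have hsub : Set.Ioc (0:ℝ) 1 ⊆ Set.Icc (0:ℝ) 1 \ {0} := by
    intro t ht
    exact ⟨⟨le_of_lt ht.1, ht.2⟩, ne_of_gt ht.1⟩
  have hfilter : 𝓝[>] (0:ℝ) ≤ 𝓝[Set.Icc (0:ℝ) 1 \ {0}] 0 := by
    rw [← nhdsWithin_Ioc_eq_nhdsGT (zero_lt_one (α := ℝ))]
    exact nhdsWithin_mono _ hsub
  have := htend.mono_left hfilter
  refine this.congr fun t => ?_
  simp [slope_def_field]

/-- One-block descent lemma. -/
lemma descent_lemma {B₁ B₂ : Type*} [NormedAddCommGroup B₁] [NormedSpace ℝ B₁]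
    [NormedAddCommGroup B₂] [NormedSpace ℝ B₂]
    (f : B₁ × B₂ → ℝ) (Df : B₁ × B₂ → (B₁ × B₂) →L[ℝ] ℝ)
    {S₁ : Set B₁} {S₂ : Set B₂} (hS₁c : Convex ℝ S₁)
    (hfdiff : ∀ x ∈ S₁ ×ˢ S₂, HasFDerivWithinAt f (Df x) (S₁ ×ˢ S₂) x)
    {L₁ : ℝ}
    (hlip₁ : ∀ x₁ ∈ S₁, ∀ x₂ ∈ S₂, ∀ h₁ : B₁, x₁ + h₁ ∈ S₁ →
      ‖(Df (x₁ + h₁, x₂)).comp (ContinuousLinearMap.inl ℝ B₁ B₂) -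
        (Df (x₁, x₂)).comp (ContinuousLinearMap.inl ℝ B₁ B₂)‖ ≤ L₁ * ‖h₁‖)
    {x₁ : B₁} {x₂ : B₂} {h₁ : B₁} (hx₁ : x₁ ∈ S₁) (hx₂ : x₂ ∈ S₂) (hxh : x₁ + h₁ ∈ S₁) :
    f (x₁ + h₁, x₂) ≤ f (x₁, x₂) + Df (x₁, x₂) (h₁, 0) + L₁ / 2 * ‖h₁‖ ^ 2 := by
  set c : ℝ := Df (x₁, x₂) (h₁, 0) with hc
  set q : ℝ := L₁ / 2 * ‖h₁‖ ^ 2 with hq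
  have hmem : ∀ s ∈ Set.Icc (0:ℝ) 1, x₁ + s • h₁ ∈ S₁ := by
    intro s hs
    have h := hS₁c hx₁ hxh (by linarith [hs.1, hs.2] : (0:ℝ) ≤ 1 - s) hs.1 (by ring)
    have heq : (1 - s) • x₁ + s • (x₁ + h₁) = x₁ + s • h₁ := by
      rw [sub_smul, one_smul, smul_add]; abel
    rwa [heq] at h
  set ψ : ℝ → ℝ := fun s => f (x₁ + s • h₁, x₂) - s * c - q * s ^ 2 with hψ
  have hψ' : ∀ s ∈ Set.Icc (0:ℝ) 1, HasDerivWithinAt ψ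
      (Df (x₁ + s • h₁, x₂) (h₁, 0) - c - q * (2 * s)) (Set.Icc (0:ℝ) 1) s := by
    intro s hs
    have hγ : HasDerivWithinAt (fun t : ℝ => ((x₁ + t • h₁, x₂) : B₁ × B₂))
        ((h₁, 0) : B₁ × B₂) (Set.Icc (0:ℝ) 1) s := by
      have h1 : HasDerivAt (fun t : ℝ => ((x₁, x₂) : B₁ × B₂) + t • ((h₁, 0) : B₁ × B₂))
          ((h₁, 0) : B₁ × B₂) s := by
        simpa using (((hasDerivAt_id s).smul_const ((h₁, (0:B₂)))).const_add ((x₁, x₂)))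
      refine (h1.congr_deriv rfl).hasDerivWithinAt.congr (fun t _ => ?_) ?_
      · simp [Prod.ext_iff, Prod.smul_def]
      · simp [Prod.ext_iff, Prod.smul_def]
    have hmaps : Set.MapsTo (fun t : ℝ => ((x₁ + t • h₁, x₂) : B₁ × B₂))
        (Set.Icc (0:ℝ) 1) (S₁ ×ˢ S₂) := fun t ht => ⟨hmem t ht, hx₂⟩
    have hcompf : HasDerivWithinAt (fun t : ℝ => f (x₁ + t • h₁, x₂))
        (Df (x₁ + s • h₁, x₂) (h₁, 0)) (Set.Icc (0:ℝ) 1) s := by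
      have := HasFDerivWithinAt.comp_hasDerivWithinAt (l := f)
        (f := fun t : ℝ => ((x₁ + t • h₁, x₂) : B₁ × B₂)) s
        (hfdiff _ ⟨hmem s hs, hx₂⟩) hγ hmaps
      simpa [Function.comp_def] using this
    have hlin : HasDerivWithinAt (fun s : ℝ => s * c) c (Set.Icc (0:ℝ) 1) s := by
      simpa using ((hasDerivAt_id s).mul_const c).hasDerivWithinAt
    have hquad : HasDerivWithinAt (fun s : ℝ => q * s ^ 2) (q * (2 * s)) (Set.Icc (0:ℝ) 1) s := by
      have := (hasDerivAt_pow 2 s).const_mul q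
      simpa using this.hasDerivWithinAt
    exact (hcompf.sub hlin).sub hquad
  have hcont : ContinuousOn ψ (Set.Icc (0:ℝ) 1) :=
    fun s hs => (hψ' s hs).continuousWithinAt
  have hderivs : ∀ s ∈ interior (Set.Icc (0:ℝ) 1),
      HasDerivAt ψ (Df (x₁ + s • h₁, x₂) (h₁, 0) - c - q * (2 * s)) s := by
    intro s hs
    rw [interior_Icc] at hs
    exact (hψ' s ⟨le_of_lt hs.1, le_of_lt hs.2⟩).hasDerivAt
      (Icc_mem_nhds hs.1 hs.2)
  have hanti : AntitoneOn ψ (Set.Icc (0:ℝ) 1) := by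
    apply antitoneOn_of_deriv_nonpos (convex_Icc 0 1) hcont
    · intro s hs
      exact ((hderivs s hs).differentiableAt).differentiableWithinAt
    · intro s hs
      rw [(hderivs s hs).deriv]
      rw [interior_Icc] at hs
      have hlip := hlip₁ x₁ hx₁ x₂ hx₂ (s • h₁) (hmem s ⟨le_of_lt hs.1, le_of_lt hs.2⟩)
      have hbound : |Df (x₁ + s • h₁, x₂) (h₁, 0) - Df (x₁, x₂) (h₁, 0)| ≤
          L₁ * ‖s • h₁‖ * ‖h₁‖ := by
        have happ : Df (x₁ + s • h₁, x₂) (h₁, 0) - Df (x₁, x₂) (h₁, 0) =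
            ((Df (x₁ + s • h₁, x₂)).comp (ContinuousLinearMap.inl ℝ B₁ B₂) -
             (Df (x₁, x₂)).comp (ContinuousLinearMap.inl ℝ B₁ B₂)) h₁ := by
          simp
        rw [happ, ← Real.norm_eq_abs]
        calc ‖(((Df (x₁ + s • h₁, x₂)).comp (ContinuousLinearMap.inl ℝ B₁ B₂) -
             (Df (x₁, x₂)).comp (ContinuousLinearMap.inl ℝ B₁ B₂)) h₁)‖
            ≤ ‖(Df (x₁ + s • h₁, x₂)).comp (ContinuousLinearMap.inl ℝ B₁ B₂) -
             (Df (x₁, x₂)).comp (ContinuousLinearMap.inl ℝ B₁ B₂)‖ * ‖h₁‖ :=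
              ContinuousLinearMap.le_opNorm _ _
          _ ≤ L₁ * ‖s • h₁‖ * ‖h₁‖ := by
              exact mul_le_mul_of_nonneg_right hlip (norm_nonneg _)
      have hnorm : ‖s • h₁‖ = s * ‖h₁‖ := by
        rw [norm_smul, Real.norm_eq_abs, abs_of_pos hs.1]
      rw [hnorm] at hbound
      have h1 := (abs_le.mp hbound).2
      have : q * (2 * s) = L₁ * (s * ‖h₁‖) * ‖h₁‖ := by rw [hq]; ring
      linarith
  have h10 := hanti (Set.mem_Icc.mpr ⟨le_refl 0, zero_le_one⟩)
    (Set.mem_Icc.mpr ⟨zero_le_one, le_refl 1⟩) zero_le_one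
  have hψ0 : ψ 0 = f (x₁, x₂) := by simp [hψ]
  have hψ1 : ψ 1 = f (x₁ + h₁, x₂) - c - q := by simp [hψ]
  rw [hψ0, hψ1] at h10
  linarith

/-- The composite objective function `H(x₁,x₂) = f(x₁,x₂) + g₁(x₁) + g₂(x₂)`. -/
noncomputable def objFun {B₁ B₂ : Type*} (f : B₁ × B₂ → ℝ) (g₁ : B₁ → ℝ) (g₂ : B₂ → ℝ)
    (x : B₁ × B₂) : ℝ :=
  f x + g₁ x.1 + g₂ x.2

set_option maxHeartbeats 1000000 in
/-- contraction of the half-step of alternating minimization under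
quadratic functional growth: for every `k ≥ 0`,
`H^{k+1/2} - H* ≤ (1 - κβ₁/(8L₁)) (H^k - H*)`, where `H^{k+1/2} = H(x₁^{k+1}, x₂^k)`. -/
theorem stmt6
    {B₁ B₂ : Type*}
    [NormedAddCommGroup B₁] [NormedSpace ℝ B₁] [CompleteSpace B₁]
    [NormedAddCommGroup B₂] [NormedSpace ℝ B₂] [CompleteSpace B₂]
    (f : B₁ × B₂ → ℝ) (Df : B₁ × B₂ → (B₁ × B₂) →L[ℝ] ℝ)
    (g₁ : B₁ → ℝ) (g₂ : B₂ → ℝ) (S₁ : Set B₁) (S₂ : Set B₂)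
    -- (P3): g₁, g₂ proper convex, subdifferentiable on their domains
    (hS₁c : Convex ℝ S₁) (hS₂c : Convex ℝ S₂)
    (hS₁ne : S₁.Nonempty) (hS₂ne : S₂.Nonempty)
    (hg₁conv : ConvexOn ℝ S₁ g₁) (hg₂conv : ConvexOn ℝ S₂ g₂)
    (hg₁sub : ∀ x₁ ∈ S₁, ∃ d : B₁ →L[ℝ] ℝ, ∀ y₁ ∈ S₁, g₁ x₁ + d (y₁ - x₁) ≤ g₁ y₁)
    (hg₂sub : ∀ x₂ ∈ S₂, ∃ d : B₂ →L[ℝ] ℝ, ∀ y₂ ∈ S₂, g₂ x₂ + d (y₂ - x₂) ≤ g₂ y₂)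
    -- (P4): f convex and Fréchet differentiable on dom g₁ × dom g₂, with derivative Df
    (hfconv : ConvexOn ℝ (S₁ ×ˢ S₂) f)
    (hfdiff : ∀ x ∈ S₁ ×ˢ S₂, HasFDerivWithinAt f (Df x) (S₁ ×ˢ S₂) x)
    -- (P2): a norm `N` on the product space and the constants β₁, β₂
    (N : B₁ × B₂ → ℝ) (β₁ : ℝ) (hβ₁ : 0 ≤ β₁)
    (hNnonneg : ∀ z : B₁ × B₂, 0 ≤ N z)
    (hN₁ : ∀ z : B₁ × B₂, β₁ * ‖z.1‖ ^ 2 ≤ N z ^ 2)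
    -- (P5): Lipschitz continuity of the first partial derivative, with finite L₁ > 0
    (L₁ : ℝ) (hL₁pos : 0 < L₁)
    (hlip₁ : ∀ x₁ ∈ S₁, ∀ x₂ ∈ S₂, ∀ h₁ : B₁, x₁ + h₁ ∈ S₁ →
      ‖(Df (x₁ + h₁, x₂)).comp (ContinuousLinearMap.inl ℝ B₁ B₂) -
        (Df (x₁, x₂)).comp (ContinuousLinearMap.inl ℝ B₁ B₂)‖ ≤ L₁ * ‖h₁‖)
    -- (P6): nonempty optimal set X with optimal value H*
    (X : Set (B₁ × B₂))
    (hX : X = {y ∈ S₁ ×ˢ S₂ | ∀ z ∈ S₁ ×ˢ S₂, objFun f g₁ g₂ y ≤ objFun f g₁ g₂ z})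
    (hXne : X.Nonempty)
    (Hstar : ℝ) (hHstar : ∀ y ∈ X, objFun f g₁ g₂ y = Hstar)
    -- projections onto X with respect to N
    (proj : B₁ × B₂ → B₁ × B₂)
    (hproj : ∀ z ∈ S₁ ×ˢ S₂, proj z ∈ X ∧ ∀ y ∈ X, N (z - proj z) ≤ N (z - y))
    -- (P8b): quadratic functional growth of H with modulus κ > 0
    (κ : ℝ) (hκ : 0 < κ)
    (hqg : ∀ z ∈ S₁ ×ˢ S₂,
      κ / 2 * N (z - proj z) ^ 2 ≤ objFun f g₁ g₂ z - Hstar)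
    (hκβ₁ : κ * β₁ ≤ 4 * L₁)
    -- the alternating minimization sequence
    (x : ℕ → B₁ × B₂)
    (hx0 : x 0 ∈ S₁ ×ˢ S₂)
    (hinit : ∀ y₂ ∈ S₂, objFun f g₁ g₂ (x 0) ≤ objFun f g₁ g₂ ((x 0).1, y₂))
    (hstep1 : ∀ k : ℕ, (x (k + 1)).1 ∈ S₁ ∧ ∀ y₁ ∈ S₁,
      objFun f g₁ g₂ ((x (k + 1)).1, (x k).2) ≤ objFun f g₁ g₂ (y₁, (x k).2))
    (hstep2 : ∀ k : ℕ, (x (k + 1)).2 ∈ S₂ ∧ ∀ y₂ ∈ S₂,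
      objFun f g₁ g₂ (x (k + 1)) ≤ objFun f g₁ g₂ ((x (k + 1)).1, y₂)) :
    ∀ k : ℕ,
      objFun f g₁ g₂ ((x (k + 1)).1, (x k).2) - Hstar ≤
        (1 - κ * β₁ / (8 * L₁)) * (objFun f g₁ g₂ (x k) - Hstar) := by
  intro k
  have hmem : ∀ j, x j ∈ S₁ ×ˢ S₂ := by
    intro j
    induction j with
    | zero => exact hx0
    | succ n _ => exact Set.mem_prod.mpr ⟨(hstep1 n).1, (hstep2 n).1⟩
  set p : B₁ × B₂ := x k with hpdef
  have hp1 : p.1 ∈ S₁ := (hmem k).1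
  have hp2 : p.2 ∈ S₂ := (hmem k).2
  have hpS : p ∈ S₁ ×ˢ S₂ := ⟨hp1, hp2⟩
  have hmin2 : ∀ y₂ ∈ S₂, objFun f g₁ g₂ p ≤ objFun f g₁ g₂ (p.1, y₂) := by
    cases k with
    | zero => exact hinit
    | succ n => exact (hstep2 n).2
  set q : B₁ × B₂ := proj p with hqdef
  have hqX : q ∈ X := (hproj p hpS).1
  have hqS : q ∈ S₁ ×ˢ S₂ := by rw [hX] at hqX; exact hqX.1
  have hq1 : q.1 ∈ S₁ := hqS.1
  have hq2 : q.2 ∈ S₂ := hqS.2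
  have hqH : objFun f g₁ g₂ q = Hstar := hHstar q hqX
  set A : ℝ := objFun f g₁ g₂ p with hA
  have hΔ0 : 0 ≤ A - Hstar := by
    have h1 := hqg p hpS
    have h2 : 0 ≤ κ / 2 * N (p - proj p) ^ 2 := by positivity
    linarith
  set t : ℝ := κ * β₁ / (4 * L₁) with htdef
  have ht0 : 0 ≤ t := by positivity
  have ht1 : t ≤ 1 := by
    rw [htdef, div_le_one (by linarith)]
    exact hκβ₁
  have h7 : 4 * L₁ * t = κ * β₁ := by
    rw [htdef]; field_simp
  set d1 : B₁ := q.1 - p.1 with hd1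
  -- gradient inequality for f
  have hgrad : Df p (q - p) ≤ f q - f p := by
    have hpq : p + (q - p) ∈ S₁ ×ˢ S₂ := by
      have : p + (q - p) = q := by abel
      rwa [this]
    have htd := slope_tendsto_dir (hS₁c.prod hS₂c) hpS hpq (hfdiff p hpS)
    refine le_of_tendsto htd ?_
    filter_upwards [Ioc_mem_nhdsGT_of_mem (Set.mem_Ico.mpr ⟨le_refl (0:ℝ), zero_lt_one⟩)]
      with s hs
    have hconv := hfconv.2 hpS hqS (by linarith [hs.1, hs.2] : (0:ℝ) ≤ 1 - s)
      (le_of_lt hs.1) (by ring)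
    simp only [smul_eq_mul] at hconv
    have heq : p + s • (q - p) = (1 - s) • p + s • q := by
      rw [smul_sub, sub_smul, one_smul]; abel
    rw [div_le_iff₀ hs.1, heq]
    calc f ((1 - s) • p + s • q) - f p ≤ ((1 - s) * f p + s * f q) - f p := by linarith
      _ = (f q - f p) * s := by ring
  -- block-2 optimality inequality
  have hopt : g₂ p.2 - g₂ q.2 ≤ Df p ((0 : B₁), q.2 - p.2) := by
    have hpd : p + ((0 : B₁), q.2 - p.2) ∈ S₁ ×ˢ S₂ := by
      have : p + ((0 : B₁), q.2 - p.2) = (p.1, q.2) := by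
        ext <;> simp
      rw [this]; exact ⟨hp1, hq2⟩
    have htd := slope_tendsto_dir (hS₁c.prod hS₂c) hpS hpd (hfdiff p hpS)
    refine ge_of_tendsto htd ?_
    filter_upwards [Ioc_mem_nhdsGT_of_mem (Set.mem_Ico.mpr ⟨le_refl (0:ℝ), zero_lt_one⟩)]
      with s hs
    set y₂ : B₂ := p.2 + s • (q.2 - p.2) with hy₂
    have hy₂S : y₂ ∈ S₂ := by
      have h := hS₂c hp2 hq2 (by linarith [hs.1, hs.2] : (0:ℝ) ≤ 1 - s)
        (le_of_lt hs.1) (by ring)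
      have heq : (1 - s) • p.2 + s • q.2 = y₂ := by
        rw [hy₂, smul_sub, sub_smul, one_smul]; abel
      rwa [heq] at h
    have hgy : g₂ y₂ ≤ (1 - s) * g₂ p.2 + s * g₂ q.2 := by
      have h := hg₂conv.2 hp2 hq2 (by linarith [hs.1, hs.2] : (0:ℝ) ≤ 1 - s)
        (le_of_lt hs.1) (by ring)
      have heq : (1 - s) • p.2 + s • q.2 = y₂ := by
        rw [hy₂, smul_sub, sub_smul, one_smul]; abel
      simp only [smul_eq_mul] at h
      rwa [heq] at h
    have hmin := hmin2 y₂ hy₂S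
    have hobj1 : objFun f g₁ g₂ p = f p + g₁ p.1 + g₂ p.2 := rfl
    have hobj2 : objFun f g₁ g₂ (p.1, y₂) = f (p.1, y₂) + g₁ p.1 + g₂ y₂ := rfl
    have heqp : p + s • ((0 : B₁), q.2 - p.2) = (p.1, y₂) := by
      ext <;> simp [hy₂]
    rw [le_div_iff₀ hs.1, heqp]
    rw [hobj2, hA, hobj1] at hmin
    nlinarith [hgy, hmin]
  -- the trial point for block 1
  set y₁ : B₁ := p.1 + t • d1 with hy₁
  have hy₁S : y₁ ∈ S₁ := by
    have h := hS₁c hp1 hq1 (by linarith : (0:ℝ) ≤ 1 - t) ht0 (by ring)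
    have heq : (1 - t) • p.1 + t • q.1 = y₁ := by
      rw [hy₁, hd1, smul_sub, sub_smul, one_smul]; abel
    rwa [heq] at h
  -- step-1 minimality
  have hhalf : objFun f g₁ g₂ ((x (k + 1)).1, (x k).2) ≤ objFun f g₁ g₂ (y₁, p.2) :=
    (hstep1 k).2 y₁ hy₁S
  -- descent lemma
  have hdesc : f (p.1 + t • d1, p.2) ≤ f (p.1, p.2) + Df (p.1, p.2) ((t • d1, 0)) +
      L₁ / 2 * ‖t • d1‖ ^ 2 := by
    have := descent_lemma f Df hS₁c hfdiff hlip₁ hp1 hp2 (by rwa [← hy₁])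
    exact this
  have hpeta : ((p.1, p.2) : B₁ × B₂) = p := by ext <;> rfl
  rw [hpeta] at hdesc
  -- linearize
  have hsmul : Df p ((t • d1, (0:B₂))) = t * Df p ((d1, (0:B₂))) := by
    have : ((t • d1, (0:B₂)) : B₁ × B₂) = t • ((d1, (0:B₂)) : B₁ × B₂) := by
      ext <;> simp
    rw [this, map_smul, smul_eq_mul]
  have hsplit : Df p ((d1, (0:B₂))) = Df p (q - p) - Df p ((0 : B₁), q.2 - p.2) := by
    have : (q - p) = ((d1, (0:B₂)) : B₁ × B₂) + ((0 : B₁), q.2 - p.2) := by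
      ext <;> simp [hd1]
    rw [this, map_add]; ring
  -- convexity of g₁
  have hgy₁ : g₁ y₁ ≤ (1 - t) * g₁ p.1 + t * g₁ q.1 := by
    have h := hg₁conv.2 hp1 hq1 (by linarith : (0:ℝ) ≤ 1 - t) ht0 (by ring)
    have heq : (1 - t) • p.1 + t • q.1 = y₁ := by
      rw [hy₁, hd1, smul_sub, sub_smul, one_smul]; abel
    simp only [smul_eq_mul] at h
    rwa [heq] at h
  -- norm bounds
  have hnormt : ‖t • d1‖ ^ 2 = t ^ 2 * ‖d1‖ ^ 2 := by
    rw [norm_smul, Real.norm_eq_abs, abs_of_nonneg ht0, mul_pow]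
  have hNb : β₁ * ‖d1‖ ^ 2 ≤ N (p - q) ^ 2 := by
    have h := hN₁ (p - q)
    have : ‖(p - q).1‖ = ‖d1‖ := by
      rw [hd1]
      show ‖p.1 - q.1‖ = ‖q.1 - p.1‖
      exact norm_sub_rev _ _
    rwa [this] at h
  have hqg' : κ / 2 * N (p - q) ^ 2 ≤ A - Hstar := hqg p hpS
  -- assemble
  have hobj3 : objFun f g₁ g₂ (y₁, p.2) = f (y₁, p.2) + g₁ y₁ + g₂ p.2 := rfl
  have hAeq : A = f p + g₁ p.1 + g₂ p.2 := rfl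
  have hHeq : Hstar = f q + g₁ q.1 + g₂ q.2 := by rw [← hqH]; rfl
  -- combine to: half ≤ A + t * (Hstar - A) + L₁/2 * t^2 * ‖d1‖^2
  have hbracket : Df p ((d1, (0:B₂))) + g₁ q.1 - g₁ p.1 + (g₂ q.2 - g₂ q.2) ≤ Hstar - A := by
    rw [hsplit]
    have := hgrad
    have := hopt
    rw [hAeq, hHeq]
    linarith
  have hkey : objFun f g₁ g₂ ((x (k + 1)).1, (x k).2) ≤
      A + t * (Hstar - A) + L₁ / 2 * t ^ 2 * ‖d1‖ ^ 2 := by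
    have h1 : objFun f g₁ g₂ ((x (k + 1)).1, (x k).2) ≤
        f (y₁, p.2) + g₁ y₁ + g₂ p.2 := by rw [← hobj3]; exact hhalf
    have h2 := hdesc
    rw [hsmul, hnormt] at h2
    have h3 : f (y₁, p.2) = f (p.1 + t • d1, p.2) := by rw [hy₁]
    have h4 : t * Df p ((d1, (0:B₂))) ≤ t * (Hstar - A) - t * (g₁ q.1 - g₁ p.1) := by
      have hb : Df p ((d1, (0:B₂))) ≤ Hstar - A - (g₁ q.1 - g₁ p.1) := by linarith [hbracket]
      linarith [mul_le_mul_of_nonneg_left hb ht0]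
    rw [h3] at h1
    linarith [hgy₁, h1, h2, h4, hAeq]
  -- quadratic term bound: L₁/2 * t^2 * ‖d1‖^2 ≤ t/4 * (A - Hstar)
  have hquadb : L₁ / 2 * t ^ 2 * ‖d1‖ ^ 2 ≤ t / 4 * (A - Hstar) := by
    have e1 : L₁ / 2 * t ^ 2 * ‖d1‖ ^ 2 = t / 8 * (κ * (β₁ * ‖d1‖ ^ 2)) := by
      have : κ * β₁ = 4 * L₁ * t := h7.symm
      calc L₁ / 2 * t ^ 2 * ‖d1‖ ^ 2 = t / 8 * ((4 * L₁ * t) * ‖d1‖ ^ 2) := by ring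
        _ = t / 8 * (κ * (β₁ * ‖d1‖ ^ 2)) := by rw [← this]; ring
    rw [e1]
    have e2 : κ * (β₁ * ‖d1‖ ^ 2) ≤ κ * N (p - q) ^ 2 :=
      mul_le_mul_of_nonneg_left hNb (le_of_lt hκ)
    have e4 : κ * N (p - q) ^ 2 ≤ 2 * (A - Hstar) := by linarith
    have e5 : t / 8 * (κ * (β₁ * ‖d1‖ ^ 2)) ≤ t / 8 * (2 * (A - Hstar)) := by
      apply mul_le_mul_of_nonneg_left _ (by linarith : (0:ℝ) ≤ t / 8)
      linarith
    linarith
  -- final arithmetic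
  have hcoef : κ * β₁ / (8 * L₁) = t / 2 := by
    rw [htdef, div_div]; ring_nf
  rw [hcoef]
  have hfinal : objFun f g₁ g₂ ((x (k + 1)).1, (x k).2) - Hstar ≤
      (1 - 3 * t / 4) * (A - Hstar) := by
    have := hkey
    nlinarith [hquadb]
  have hlast : (1 - 3 * t / 4) * (A - Hstar) ≤ (1 - t / 2) * (A - Hstar) := by
    nlinarith [mul_nonneg ht0 hΔ0]
  calc objFun f g₁ g₂ ((x (k + 1)).1, (x k).2) - Hstar ≤ (1 - 3 * t / 4) * (A - Hstar) := hfinal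
    _ ≤ (1 - t / 2) * (A - Hstar) := hlast
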